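/- Let R be a commutative unitary ring and let σ ∈ Σ_n have cycle type λ = (λ_1,…,λ_s) (fixed points counted as parts equal to 1). Then S_n(σ,R) is a free R-module of rank ℓ_n(σ) = Σ_{1≤i,j≤s} gcd(λ_i, λ_j). -/

import Mathlib

open Matrix Equiv

/-- The `σ`-invariant matrix ring `S_n(σ,R) = {a ∈ M_n(R) | a_{ij} = a_{σ(i)σ(j)}}`. -/
def invariantSubring (R : Type*) [Ring R] {n : ℕ} (σ : Equiv.Perm (Fin n)) :
    Subring (Matrix (Fin n) (Fin n) R) where
  carrier := {a | ∀ i j, a i j = a (σ i) (σ j)}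
  zero_mem' := fun i j => rfl
  one_mem' := fun i j => by
    simp [Matrix.one_apply, EmbeddingLike.apply_eq_iff_eq]
  add_mem' := fun {a b} ha hb i j => by
    simp only [Matrix.add_apply]; rw [ha i j, hb i j]
  neg_mem' := fun {a} ha i j => by
    simp only [Matrix.neg_apply]; rw [ha i j]
  mul_mem' := fun {a b} ha hb i j => by
    simp only [Matrix.mul_apply]
    calc ∑ k, a i k * b k j
        = ∑ k, a (σ i) (σ k) * b (σ k) (σ j) :=
          Finset.sum_congr rfl fun k _ => by rw [← ha, ← hb]
      _ = ∑ k, a (σ i) k * b k (σ j) := Equiv.sum_comp σ fun k => a (σ i) k * b k (σ j)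

/-- `σ ∈ Σ_n` has cycle type `(lam 0, …, lam (s-1))`, where fixed points are counted
as parts equal to `1`: the multiset of lengths of the disjoint cycles of `σ`, together
with one part `1` for each fixed point, is the multiset of values of `lam`. -/
def HasFullCycleType {n s : ℕ} (σ : Equiv.Perm (Fin n)) (lam : Fin s → ℕ) : Prop :=
  σ.cycleType + Multiset.replicate (n - σ.cycleType.sum) 1 = (List.ofFn lam : Multiset ℕ)

/-- For a commutative ring `R`, `S_n(σ,R)` as an `R`-subalgebra of `M_n(R)`. -/
def invariantSubalgebra (R : Type*) [CommRing R] {n : ℕ} (σ : Equiv.Perm (Fin n)) :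
    Subalgebra R (Matrix (Fin n) (Fin n) R) where
  toSubsemiring := (invariantSubring R σ).toSubsemiring
  algebraMap_mem' := fun r i j => by
    simp [Matrix.algebraMap_matrix_apply, EmbeddingLike.apply_eq_iff_eq]

/-- The model type: disjoint union of blocks `ZMod (lam i)`. -/
abbrev Blk {s : ℕ} (lam : Fin s → ℕ) : Type := Σ i : Fin s, ZMod (lam i)

/-- The model shift permutation: `+1` on every block. -/
def shiftB {s : ℕ} (lam : Fin s → ℕ) : Equiv.Perm (Blk lam) :=
  Equiv.sigmaCongrRight fun i => Equiv.addRight (1 : ZMod (lam i))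

lemma shiftB_apply {s : ℕ} (lam : Fin s → ℕ) (i : Fin s) (z : ZMod (lam i)) :
    shiftB lam ⟨i, z⟩ = ⟨i, z + 1⟩ := rfl

/-- Shift by `t`. -/
def shiftT {s : ℕ} (lam : Fin s → ℕ) (t : ℕ) (u : Blk lam) : Blk lam :=
  ⟨u.1, u.2 + (t : ZMod (lam u.1))⟩

lemma shiftT_zero {s : ℕ} (lam : Fin s → ℕ) (u : Blk lam) : shiftT lam 0 u = u := by
  cases u; simp [shiftT]

lemma shiftT_succ {s : ℕ} (lam : Fin s → ℕ) (t : ℕ) (u : Blk lam) :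
    shiftT lam (t + 1) u = shiftB lam (shiftT lam t u) := by
  cases u; simp [shiftT, shiftB_apply]; push_cast; ring


/-- Index type for orbits of the shift on pairs. -/
abbrev PairK {s : ℕ} (lam : Fin s → ℕ) : Type :=
  Σ p : Fin s × Fin s, ZMod (Nat.gcd (lam p.1) (lam p.2))

/-- The classifying invariant of a pair. -/
def pairClass {s : ℕ} (lam : Fin s → ℕ) (u v : Blk lam) : PairK lam :=
  ⟨(u.1, v.1), ZMod.castHom (Nat.gcd_dvd_left (lam u.1) (lam v.1))
      (ZMod (Nat.gcd (lam u.1) (lam v.1))) u.2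
    - ZMod.castHom (Nat.gcd_dvd_right (lam u.1) (lam v.1))
      (ZMod (Nat.gcd (lam u.1) (lam v.1))) v.2⟩

lemma pairClass_shiftB {s : ℕ} (lam : Fin s → ℕ) (u v : Blk lam) :
    pairClass lam (shiftB lam u) (shiftB lam v) = pairClass lam u v := by
  rcases u with ⟨i, x⟩; rcases v with ⟨j, y⟩
  simp only [pairClass, shiftB_apply, map_add, _root_.map_one]
  exact congrArg (Sigma.mk _) (by
    show ZMod.castHom (Nat.gcd_dvd_left (lam i) (lam j)) (ZMod (Nat.gcd (lam i) (lam j))) (x + 1)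
      - ZMod.castHom (Nat.gcd_dvd_right (lam i) (lam j)) (ZMod (Nat.gcd (lam i) (lam j))) (y + 1)
      = ZMod.castHom (Nat.gcd_dvd_left (lam i) (lam j)) (ZMod (Nat.gcd (lam i) (lam j))) x
      - ZMod.castHom (Nat.gcd_dvd_right (lam i) (lam j)) (ZMod (Nat.gcd (lam i) (lam j))) y
    rw [map_add, map_add, _root_.map_one, _root_.map_one]; ring)

lemma pairClass_rep {s : ℕ} (lam : Fin s → ℕ) [∀ i, NeZero (lam i)] (k : PairK lam) :
    pairClass lam ⟨k.1.1, ((k.2.val : ℕ) : ZMod (lam k.1.1))⟩ ⟨k.1.2, 0⟩ = k := by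
  haveI : ∀ p : Fin s × Fin s, NeZero (Nat.gcd (lam p.1) (lam p.2)) := fun p =>
    ⟨Nat.gcd_ne_zero_left (NeZero.ne _)⟩
  rcases k with ⟨⟨i, j⟩, z⟩
  simp only [pairClass]
  refine congrArg (Sigma.mk _) ?_
  rw [map_zero, sub_zero, map_natCast]
  exact ZMod.natCast_rightInverse z

/-- CRT: pairs with equal invariants lie in the same shift orbit. -/
lemma exists_shiftT_of_pairClass_eq {s : ℕ} (lam : Fin s → ℕ) [∀ i, NeZero (lam i)]
    {u v u' v' : Blk lam} (h : pairClass lam u v = pairClass lam u' v') :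
    ∃ t : ℕ, shiftT lam t u = u' ∧ shiftT lam t v = v' := by
  rcases u with ⟨i, x⟩; rcases v with ⟨j, y⟩; rcases u' with ⟨i', x'⟩; rcases v' with ⟨j', y'⟩
  simp only [pairClass] at h
  obtain ⟨h1, h2⟩ := Sigma.ext_iff.mp h
  obtain ⟨rfl, rfl⟩ : i = i' ∧ j = j' := Prod.ext_iff.mp h1
  replace h2 :
      ZMod.castHom (Nat.gcd_dvd_left (lam i) (lam j)) (ZMod (Nat.gcd (lam i) (lam j))) x
      - ZMod.castHom (Nat.gcd_dvd_right (lam i) (lam j)) (ZMod (Nat.gcd (lam i) (lam j))) y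
      = ZMod.castHom (Nat.gcd_dvd_left (lam i) (lam j)) (ZMod (Nat.gcd (lam i) (lam j))) x'
      - ZMod.castHom (Nat.gcd_dvd_right (lam i) (lam j)) (ZMod (Nat.gcd (lam i) (lam j))) y' :=
    eq_of_heq h2
  have h3 : (((x' - x).val : ℕ) : ZMod (Nat.gcd (lam i) (lam j)))
      = (((y' - y).val : ℕ) : ZMod (Nat.gcd (lam i) (lam j))) := by
    rw [ZMod.natCast_val, ZMod.natCast_val,
      ← ZMod.castHom_apply (h := Nat.gcd_dvd_left (lam i) (lam j)),
      ← ZMod.castHom_apply (h := Nat.gcd_dvd_right (lam i) (lam j)), map_sub, map_sub]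
    linear_combination -h2
  have hmod : (x' - x).val ≡ (y' - y).val [MOD Nat.gcd (lam i) (lam j)] :=
    (ZMod.natCast_eq_natCast_iff _ _ _).mp h3
  obtain ⟨t, ht1, ht2⟩ := Nat.chineseRemainder' hmod
  refine ⟨t, congrArg (Sigma.mk i) ?_, congrArg (Sigma.mk j) ?_⟩
  · have : ((t : ℕ) : ZMod (lam i)) = (((x' - x).val : ℕ) : ZMod (lam i)) :=
      (ZMod.natCast_eq_natCast_iff _ _ _).mpr ht1
    rw [this, ZMod.natCast_rightInverse (x' - x)]; ring
  · have : ((t : ℕ) : ZMod (lam j)) = (((y' - y).val : ℕ) : ZMod (lam j)) :=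
      (ZMod.natCast_eq_natCast_iff _ _ _).mpr ht2
    rw [this, ZMod.natCast_rightInverse (y' - y)]; ring

lemma mem_invariantSubalgebra {R : Type*} [CommRing R] {n : ℕ} {σ : Equiv.Perm (Fin n)}
    {a : Matrix (Fin n) (Fin n) R} :
    a ∈ invariantSubalgebra R σ ↔ ∀ i j, a i j = a (σ i) (σ j) := Iff.rfl

lemma invariant_orbit {R : Type*} [CommRing R] {n s : ℕ} (σ : Equiv.Perm (Fin n))
    (lam : Fin s → ℕ) [∀ i, NeZero (lam i)] (e : Fin n ≃ Blk lam)
    (he : ∀ x, e (σ x) = shiftB lam (e x)) (a : Matrix (Fin n) (Fin n) R)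
    (ha : ∀ i j, a i j = a (σ i) (σ j)) (u v u' v' : Blk lam)
    (h : pairClass lam u v = pairClass lam u' v') :
    a (e.symm u) (e.symm v) = a (e.symm u') (e.symm v') := by
  have hstep : ∀ w : Blk lam, σ (e.symm w) = e.symm (shiftB lam w) := fun w => by
    have := he (e.symm w)
    rw [e.apply_symm_apply] at this
    have h2 := congrArg e.symm this
    rwa [e.symm_apply_apply] at h2
  have iter : ∀ (t : ℕ) (w w' : Blk lam),
      a (e.symm w) (e.symm w') = a (e.symm (shiftT lam t w)) (e.symm (shiftT lam t w')) := by
    intro t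
    induction t with
    | zero => intro w w'; rw [shiftT_zero, shiftT_zero]
    | succ t ih =>
      intro w w'
      rw [shiftT_succ, shiftT_succ, ← hstep, ← hstep, ← ha, ih]
  obtain ⟨t, h1, h2⟩ := exists_shiftT_of_pairClass_eq lam h
  rw [← h1, ← h2, ← iter]

noncomputable def invariantEquiv {R : Type*} [CommRing R] {n s : ℕ} (σ : Equiv.Perm (Fin n))
    (lam : Fin s → ℕ) [∀ i, NeZero (lam i)] (e : Fin n ≃ Blk lam)
    (he : ∀ x, e (σ x) = shiftB lam (e x)) :
    (PairK lam → R) ≃ₗ[R] invariantSubalgebra R σ where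
  toFun f := ⟨Matrix.of fun i j => f (pairClass lam (e i) (e j)), fun i j =>
    (congrArg f (by rw [he i, he j, pairClass_shiftB])).symm⟩
  map_add' f g := rfl
  map_smul' r f := rfl
  invFun a k := (a : Matrix (Fin n) (Fin n) R)
    (e.symm ⟨k.1.1, ((k.2.val : ℕ) : ZMod (lam k.1.1))⟩) (e.symm ⟨k.1.2, (0 : ZMod (lam k.1.2))⟩)
  left_inv f := funext fun k => by
    show f (pairClass lam (e (e.symm _)) (e (e.symm _))) = f k
    rw [e.apply_symm_apply, e.apply_symm_apply, pairClass_rep]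
  right_inv a := Subtype.ext <| funext fun i => funext fun j => by
    show (a : Matrix (Fin n) (Fin n) R) _ _ = (a : Matrix (Fin n) (Fin n) R) i j
    have := invariant_orbit σ lam e he (a : Matrix (Fin n) (Fin n) R) a.2
      _ _ (e i) (e j) (pairClass_rep lam (pairClass lam (e i) (e j)))
    rwa [e.symm_apply_apply, e.symm_apply_apply] at this

theorem invariant_basis {R : Type*} [CommRing R] {n s : ℕ} (σ : Equiv.Perm (Fin n))
    (lam : Fin s → ℕ) [∀ i, NeZero (lam i)] (e : Fin n ≃ Blk lam)
    (he : ∀ x, e (σ x) = shiftB lam (e x)) :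
    Nonempty (Module.Basis (PairK lam) R (invariantSubalgebra R σ)) := by
  haveI : ∀ p : Fin s × Fin s, NeZero (Nat.gcd (lam p.1) (lam p.2)) := fun p =>
    ⟨Nat.gcd_ne_zero_left (NeZero.ne _)⟩
  exact ⟨(Pi.basisFun R (PairK lam)).map (invariantEquiv σ lam e he)⟩

lemma noncommProd_apply_fix {ι γ : Type*} (s : Finset ι) (P : ι → Equiv.Perm γ)
    (hc : Set.Pairwise ↑s fun a b => Commute (P a) (P b)) (x : γ)
    (h : ∀ j ∈ s, P j x = x) : s.noncommProd P hc x = x := by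
  classical
  induction s using Finset.induction_on with
  | empty => simp
  | @insert a t ha ih =>
    rw [Finset.noncommProd_insert_of_notMem _ _ _ _ ha]
    have : t.noncommProd P (hc.mono (by simp [Set.subset_insert])) x = x :=
      ih _ fun j hj => h j (Finset.mem_insert_of_mem hj)
    show P a (t.noncommProd P _ x) = x
    rw [this]
    exact h a (Finset.mem_insert_self a t)

lemma noncommProd_apply_single {ι γ : Type*} [DecidableEq ι] (s : Finset ι)
    (P : ι → Equiv.Perm γ) (hc : Set.Pairwise ↑s fun a b => Commute (P a) (P b)) (i₀ : ι)
    (hi : i₀ ∈ s) (x : γ) (h1 : ∀ j ∈ s, j ≠ i₀ → P j x = x)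
    (h2 : ∀ j ∈ s, j ≠ i₀ → P j (P i₀ x) = P i₀ x) :
    s.noncommProd P hc x = P i₀ x := by
  classical
  induction s using Finset.induction_on with
  | empty => exact absurd hi (Finset.notMem_empty i₀)
  | @insert a t ha ih =>
    rw [Finset.noncommProd_insert_of_notMem _ _ _ _ ha]
    show P a (t.noncommProd P _ x) = P i₀ x
    rcases eq_or_ne a i₀ with rfl | hne
    · rw [noncommProd_apply_fix _ _ _ _ fun j hj =>
        h1 j (Finset.mem_insert_of_mem hj) (fun hji => ha (hji ▸ hj))]
    · have hit : i₀ ∈ t := (Finset.mem_insert.mp hi).resolve_left fun h => hne h.symm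
      rw [ih (hc.mono (by simp [Set.subset_insert])) hit
        (fun j hj hji => h1 j (Finset.mem_insert_of_mem hj) hji)
        (fun j hj hji => h2 j (Finset.mem_insert_of_mem hj) hji)]
      exact h2 a (Finset.mem_insert_self a t) hne

/-- The rotation `+1` on `ZMod m` with `2 ≤ m` is a cycle with full support. -/
lemma addRight_one_pow_apply {m : ℕ} (t : ℕ) (x : ZMod m) :
    ((Equiv.addRight (1 : ZMod m)) ^ t) x = x + t := by
  induction t generalizing x with
  | zero => simp
  | succ t ih =>
    rw [pow_succ, Equiv.Perm.mul_apply]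
    show ((Equiv.addRight (1 : ZMod m)) ^ t) (x + 1) = _
    rw [ih (x + 1)]
    push_cast; ring

lemma isCycle_addRight_one {m : ℕ} (hm : 2 ≤ m) :
    Equiv.Perm.IsCycle (Equiv.addRight (1 : ZMod m)) := by
  haveI : NeZero m := ⟨by omega⟩
  haveI : Fact (1 < m) := ⟨hm⟩
  refine ⟨0, ?_, fun y hy => ?_⟩
  · show (0 : ZMod m) + 1 ≠ 0
    simpa using one_ne_zero
  · refine ⟨(y.val : ℤ), ?_⟩
    rw [zpow_natCast, addRight_one_pow_apply]
    rw [zero_add]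
    exact ZMod.natCast_rightInverse y

lemma cycleType_addRight_one {m : ℕ} [NeZero m] (hm : 2 ≤ m) :
    Equiv.Perm.cycleType (Equiv.addRight (1 : ZMod m)) = {m} := by
  haveI : Fact (1 < m) := ⟨hm⟩
  rw [(isCycle_addRight_one hm).cycleType]
  congr 1
  have hsupp : (Equiv.addRight (1 : ZMod m)).support = Finset.univ := by
    refine Finset.eq_univ_iff_forall.mpr fun y => Equiv.Perm.mem_support.mpr ?_
    show y + 1 ≠ y
    simp
  rw [hsupp]
  simp [ZMod.card]

lemma cycleType_addRight_one_eq_ite {m : ℕ} [NeZero m] (hm : 1 ≤ m) :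
    Equiv.Perm.cycleType (Equiv.addRight (1 : ZMod m))
      = if 2 ≤ m then ({m} : Multiset ℕ) else 0 := by
  rcases eq_or_lt_of_le hm with h1 | h2
  · subst h1
    rw [if_neg (by omega)]
    have : (Equiv.addRight (1 : ZMod 1)) = 1 := by
      ext x; exact Subsingleton.elim _ _
    rw [this, Equiv.Perm.cycleType_one]
  · rw [if_pos (show 2 ≤ m from h2), cycleType_addRight_one h2]

section Model

variable {n s : ℕ} (lam : Fin s → ℕ) (e0 : Blk lam ≃ Fin n)

/-- The fiber of a block. -/
def blkFiber (i : Fin s) : {w : Blk lam // w.1 = i} ≃ ZMod (lam i) where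
  toFun w := w.2 ▸ w.1.2
  invFun z := ⟨⟨i, z⟩, rfl⟩
  left_inv w := by rcases w with ⟨⟨j, z⟩, h⟩; subst h; rfl
  right_inv z := rfl

def gBlock (i : Fin s) : ZMod (lam i) ≃ {x : Fin n // (e0.symm x).1 = i} :=
  (blkFiber lam i).symm.trans (e0.subtypeEquiv fun w => by simp)

/-- The cycle of `modelPerm` acting on block `i`. -/
def blockPerm (i : Fin s) : Equiv.Perm (Fin n) :=
  (Equiv.addRight (1 : ZMod (lam i))).extendDomain (gBlock lam e0 i)

lemma blockPerm_apply_same (i : Fin s) (z : ZMod (lam i)) :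
    blockPerm lam e0 i (e0 ⟨i, z⟩) = e0 ⟨i, z + 1⟩ := by
  have hp : (e0.symm (e0 ⟨i, z⟩)).1 = i := by simp
  rw [blockPerm]
  have key := Equiv.Perm.extendDomain_apply_subtype
    (Equiv.addRight (1 : ZMod (lam i))) (gBlock lam e0 i) hp
  rw [key]
  have hsymm : (gBlock lam e0 i).symm ⟨e0 ⟨i, z⟩, hp⟩ = z := by
    rw [Equiv.symm_apply_eq]
    exact Subtype.ext rfl
  rw [hsymm]
  rfl

lemma blockPerm_apply_ne (i j : Fin s) (z : ZMod (lam i)) (h : i ≠ j) :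
    blockPerm lam e0 j (e0 ⟨i, z⟩) = e0 ⟨i, z⟩ :=
  Equiv.Perm.extendDomain_apply_not_subtype
    (Equiv.addRight (1 : ZMod (lam j))) (gBlock lam e0 j) (by simp [h])

lemma blockPerm_disjoint (i j : Fin s) (hij : i ≠ j) :
    Equiv.Perm.Disjoint (blockPerm lam e0 i) (blockPerm lam e0 j) := fun x => by
  obtain ⟨w, rfl⟩ : ∃ w, x = e0 w := ⟨e0.symm x, (e0.apply_symm_apply x).symm⟩
  rcases w with ⟨k, z⟩
  rcases eq_or_ne k i with rfl | h
  · right; exact blockPerm_apply_ne lam e0 k j z hij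
  · left; exact blockPerm_apply_ne lam e0 k i z h

lemma blockPerm_pairwise_disjoint :
    Set.Pairwise ↑(Finset.univ : Finset (Fin s))
      fun a b => Equiv.Perm.Disjoint (blockPerm lam e0 a) (blockPerm lam e0 b) :=
  fun a _ b _ hab => blockPerm_disjoint lam e0 a b hab

/-- The model permutation: `shiftB` transported to `Fin n`. -/
def modelPerm : Equiv.Perm (Fin n) :=
  Finset.univ.noncommProd (blockPerm lam e0)
    ((blockPerm_pairwise_disjoint lam e0).imp fun _ _ => Equiv.Perm.Disjoint.commute)

lemma modelPerm_apply (i : Fin s) (z : ZMod (lam i)) :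
    modelPerm lam e0 (e0 ⟨i, z⟩) = e0 ⟨i, z + 1⟩ := by
  rw [modelPerm, noncommProd_apply_single _ _ _ i (Finset.mem_univ i) _
    (fun j _ hj => blockPerm_apply_ne lam e0 i j z (Ne.symm hj))
    (fun j _ hj => by
      rw [blockPerm_apply_same]
      exact blockPerm_apply_ne lam e0 i j (z + 1) (Ne.symm hj))]
  exact blockPerm_apply_same lam e0 i z

lemma modelPerm_cycleType (hpos : ∀ i, 1 ≤ lam i) :
    (modelPerm lam e0).cycleType
      = ∑ i : Fin s, (if 2 ≤ lam i then ({lam i} : Multiset ℕ) else 0) := by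
  haveI : ∀ i, NeZero (lam i) := fun i => ⟨by have := hpos i; omega⟩
  rw [modelPerm, Equiv.Perm.Disjoint.cycleType_noncommProd
    (blockPerm_pairwise_disjoint lam e0)]
  refine Finset.sum_congr rfl fun i _ => ?_
  rw [blockPerm, Equiv.Perm.cycleType_extendDomain, cycleType_addRight_one_eq_ite (hpos i)]

end Model

lemma aux_sum_ite_filter {α : Type*} (lam : α → ℕ) (m : Multiset α) :
    (m.map fun i => if 2 ≤ lam i then ({lam i} : Multiset ℕ) else 0).sum
      = Multiset.filter (fun a => 2 ≤ a) (m.map lam) := by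
  refine Multiset.induction_on m (by simp) fun a m ih => ?_
  rw [Multiset.map_cons, Multiset.map_cons, Multiset.sum_cons, Multiset.filter_cons, ih]

lemma sum_ite_eq_filter {s : ℕ} (lam : Fin s → ℕ) :
    (∑ i : Fin s, if 2 ≤ lam i then ({lam i} : Multiset ℕ) else 0)
      = Multiset.filter (fun a => 2 ≤ a) (List.ofFn lam : Multiset ℕ) := by
  exact (aux_sum_ite_filter lam Finset.univ.val).trans (by rw [Fin.univ_val_map])

lemma cycleType_eq_filter {n s : ℕ} (σ : Equiv.Perm (Fin n)) (lam : Fin s → ℕ)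
    (hcyc : HasFullCycleType σ lam) :
    σ.cycleType = Multiset.filter (fun a => 2 ≤ a) (List.ofFn lam : Multiset ℕ) := by
  rw [← hcyc, Multiset.filter_add,
    Multiset.filter_eq_self.mpr (fun a ha => Equiv.Perm.two_le_of_mem_cycleType ha),
    Multiset.filter_eq_nil.mpr
      (fun a ha => by rw [Multiset.eq_of_mem_replicate ha]; omega), add_zero]


/-- Let `R` be a commutative unitary ring and `σ ∈ Σ_n` of cycle type `λ = (λ_1,…,λ_s)`
(fixed points counted as parts equal to `1`).  Then `S_n(σ,R)` is a free `R`-module of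
rank `ℓ_n(σ) = Σ_{1≤i,j≤s} gcd(λ_i,λ_j)`. -/
theorem invariantSubalgebra_free_rank (R : Type*) [CommRing R] {n s : ℕ}
    (σ : Equiv.Perm (Fin n)) (lam : Fin s → ℕ)
    (hpos : ∀ i, 1 ≤ lam i) (hmono : ∀ i j : Fin s, i ≤ j → lam j ≤ lam i)
    (hsum : ∑ i, lam i = n) (hcyc : HasFullCycleType σ lam) :
    Nonempty (Module.Basis (Fin (∑ i : Fin s, ∑ j : Fin s, Nat.gcd (lam i) (lam j))) R
      (invariantSubalgebra R σ)) := by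
  classical
  haveI : ∀ i, NeZero (lam i) := fun i => ⟨by have := hpos i; omega⟩
  haveI : ∀ p : Fin s × Fin s, NeZero (Nat.gcd (lam p.1) (lam p.2)) := fun p =>
    ⟨Nat.gcd_ne_zero_left (NeZero.ne _)⟩
  have hcard : Fintype.card (Blk lam) = n := by
    rw [Fintype.card_sigma]
    simp only [ZMod.card]
    exact hsum
  let e0 : Blk lam ≃ Fin n := Fintype.equivFinOfCardEq hcard
  have hct : σ.cycleType = (modelPerm lam e0).cycleType := by
    rw [modelPerm_cycleType lam e0 hpos, sum_ite_eq_filter, cycleType_eq_filter σ lam hcyc]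
  obtain ⟨c, hc⟩ := isConj_iff.mp (Equiv.Perm.isConj_of_cycleType_eq hct)
  have hcomm : ∀ x, modelPerm lam e0 (c x) = c (σ x) := by
    intro x
    rw [← hc]
    simp [Equiv.Perm.mul_apply]
  let e : Fin n ≃ Blk lam := (c : Equiv.Perm (Fin n)).trans e0.symm
  have he : ∀ x, e (σ x) = shiftB lam (e x) := by
    intro x
    show e0.symm (c (σ x)) = shiftB lam (e0.symm (c x))
    rw [← hcomm x]
    obtain ⟨w, hw⟩ : ∃ w, c x = e0 w := ⟨e0.symm (c x), (e0.apply_symm_apply _).symm⟩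
    rw [hw]
    rcases w with ⟨i, z⟩
    rw [modelPerm_apply lam e0 i z, e0.symm_apply_apply, e0.symm_apply_apply]
    rfl
  obtain ⟨b⟩ := invariant_basis (R := R) σ lam e he
  have hK : Fintype.card (PairK lam) = ∑ i : Fin s, ∑ j : Fin s, Nat.gcd (lam i) (lam j) := by
    rw [Fintype.card_sigma]
    simp only [ZMod.card]
    exact Fintype.sum_prod_type fun p => Nat.gcd (lam p.1) (lam p.2)
  exact ⟨b.reindex (Fintype.equivFinOfCardEq hK)⟩
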